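/- Let G be an Abelian group of cardinality γ > ℵ₀, let F_γ be the free group of rank γ, and let κ be a cardinal such that either ℵ₀ < κ < γ, or κ = γ and γ is singular. Then G and F_γ are not κ-coarsely equivalent: there do not exist subsets A ⊆ G and B ⊆ F_γ, sets X₀ ∈ [G]^{<κ} and Y₀ ∈ [F_γ]^{<κ} with G = X₀·A and F_γ = Y₀·B, and a bijection h : A → B such that for every X ∈ [G]^{<κ} and every Y ∈ [F_γ]^{<κ} there exist X' ∈ [G]^{<κ} and Y' ∈ [F_γ]^{<κ} with h((X·a) ∩ A) ⊆ Y'·h(a) for all a ∈ A and h⁻¹((Y·b) ∩ B) ⊆ X'·h⁻¹(b) for all b ∈ B. -/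

import Mathlib

open Cardinal Pointwise

universe u

set_option linter.unusedSectionVars false

namespace NotCoarseAux

variable {ι : Type u} [DecidableEq ι]

/-- The set of letters occurring in the reduced word of an element of a free group. -/
def wsupp (w : FreeGroup ι) : Set ι := {l | l ∈ w.toWord.map Prod.fst}

lemma wsupp_finite (w : FreeGroup ι) : (wsupp w).Finite := List.finite_toSet _

lemma mk_mem_closure_supp (L : List (ι × Bool)) :
    FreeGroup.mk L ∈ Subgroup.closure (FreeGroup.of '' {l | l ∈ L.map Prod.fst}) := by
  induction L with
  | nil =>
      have h1 : FreeGroup.mk ([] : List (ι × Bool)) = 1 := rfl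
      rw [h1]; exact Subgroup.one_mem _
  | cons p t ih =>
      have hsplit : FreeGroup.mk (p :: t) = FreeGroup.mk [p] * FreeGroup.mk t := by
        rw [FreeGroup.mul_mk]; rfl
      rw [hsplit]
      refine Subgroup.mul_mem _ ?_ ?_
      · rcases p with ⟨x, b⟩
        have hx : FreeGroup.of x ∈
            Subgroup.closure (FreeGroup.of '' {l | l ∈ ((x, b) :: t).map Prod.fst}) :=
          Subgroup.subset_closure ⟨x, by simp, rfl⟩
        cases b
        · have h2 : FreeGroup.mk [(x, false)] = (FreeGroup.of x)⁻¹ := by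
            have h3 : (FreeGroup.of x) = FreeGroup.mk [(x, true)] := rfl
            rw [h3, FreeGroup.inv_mk]; rfl
          rw [h2]; exact Subgroup.inv_mem _ hx
        · exact hx
      · refine SetLike.le_def.mp (Subgroup.closure_mono (Set.image_mono ?_)) ih
        intro l hl
        simp only [Set.mem_setOf_eq, List.map_cons, List.mem_cons] at hl ⊢
        exact Or.inr hl

lemma mem_closure_wsupp (w : FreeGroup ι) :
    w ∈ Subgroup.closure (FreeGroup.of '' wsupp w) := by
  have h := mk_mem_closure_supp (w.toWord)
  rwa [FreeGroup.mk_toWord] at h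

lemma hom_mem_of_supp {P : Type*} [Group P] (φ : FreeGroup ι →* P) (K : Subgroup P)
    (w : FreeGroup ι) (hw : ∀ l ∈ wsupp w, φ (FreeGroup.of l) ∈ K) : φ w ∈ K := by
  have h1 : Subgroup.closure (FreeGroup.of '' wsupp w) ≤ K.comap φ := by
    rw [Subgroup.closure_le]
    rintro _ ⟨l, hl, rfl⟩
    exact hw l hl
  exact h1 (mem_closure_wsupp w)

/-- The subgroup `{1, g}` for an involution `g`. -/
def pairSubgroup {P : Type*} [Group P] (g : P) (hg : g * g = 1) : Subgroup P where
  carrier := {1, g}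
  one_mem' := Or.inl rfl
  mul_mem' := by
    rintro a b (rfl | rfl) (rfl | rfl)
    · exact Or.inl (one_mul 1)
    · exact Or.inr (one_mul _)
    · exact Or.inr (mul_one _)
    · exact Or.inl hg
  inv_mem' := by
    rintro a (rfl | rfl)
    · exact Or.inl inv_one
    · exact Or.inr (inv_eq_of_mul_eq_one_right hg)

lemma perm_sigma_tau_neq :
    ∀ y y' : Equiv.Perm (Fin 3),
      (y = 1 ∨ y = Equiv.swap 1 2) → (y' = 1 ∨ y' = Equiv.swap 0 1) →
      y * Equiv.swap 0 1 ≠ y' * Equiv.swap 1 2 := by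
  rintro y y' (rfl | rfl) (rfl | rfl) <;> decide

/-- The central free-group fact: an element cannot simultaneously be
`y * (u⁻¹ * x_i)` and `y' * (u'⁻¹ * x_j)` when `i ≠ j`, the word `y` avoids the letter `i`,
the word `y'` avoids the letter `j`, and `u, u'` avoid both letters. -/
lemma ending_letter_clash (i j : ι) (hij : i ≠ j) (y y' uu uu' q : FreeGroup ι)
    (hyq : q = y * ((uu)⁻¹ * FreeGroup.of i))
    (hy'q : q = y' * ((uu')⁻¹ * FreeGroup.of j))
    (hyi : i ∉ wsupp y) (hy'j : j ∉ wsupp y')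
    (huui : i ∉ wsupp uu) (huuj : j ∉ wsupp uu)
    (huu'i : i ∉ wsupp uu') (huu'j : j ∉ wsupp uu') : False := by
  set σ : Equiv.Perm (Fin 3) := Equiv.swap 0 1 with hσ
  set τ : Equiv.Perm (Fin 3) := Equiv.swap 1 2 with hτ
  set φ : FreeGroup ι →* Equiv.Perm (Fin 3) :=
    FreeGroup.lift (fun l : ι => if l = i then σ else if l = j then τ else 1) with hφ
  have hφi : φ (FreeGroup.of i) = σ := by rw [hφ, FreeGroup.lift_apply_of, if_pos rfl]
  have hφj : φ (FreeGroup.of j) = τ := by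
    rw [hφ, FreeGroup.lift_apply_of, if_neg (Ne.symm hij), if_pos rfl]
  have hτ2 : τ * τ = 1 := by rw [hτ]; decide
  have hσ2 : σ * σ = 1 := by rw [hσ]; decide
  have hy_mem : φ y = 1 ∨ φ y = τ := by
    have hmem : φ y ∈ pairSubgroup τ hτ2 := by
      refine hom_mem_of_supp φ _ y ?_
      intro l hl
      have hli : l ≠ i := fun e => hyi (e ▸ hl)
      rw [hφ, FreeGroup.lift_apply_of, if_neg hli]
      by_cases hlj : l = j
      · rw [if_pos hlj]; exact Or.inr rfl
      · rw [if_neg hlj]; exact Or.inl rfl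
    exact hmem
  have hy'_mem : φ y' = 1 ∨ φ y' = σ := by
    have hmem : φ y' ∈ pairSubgroup σ hσ2 := by
      refine hom_mem_of_supp φ _ y' ?_
      intro l hl
      have hlj : l ≠ j := fun e => hy'j (e ▸ hl)
      rw [hφ, FreeGroup.lift_apply_of]
      by_cases hli : l = i
      · rw [if_pos hli]; exact Or.inr rfl
      · rw [if_neg hli, if_neg hlj]; exact Or.inl rfl
    exact hmem
  have hkill : ∀ v : FreeGroup ι, i ∉ wsupp v → j ∉ wsupp v → φ v = 1 := by
    intro v hvi hvj
    have hmem : φ v ∈ (⊥ : Subgroup (Equiv.Perm (Fin 3))) := by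
      refine hom_mem_of_supp φ _ v ?_
      intro l hl
      have hli : l ≠ i := fun e => hvi (e ▸ hl)
      have hlj : l ≠ j := fun e => hvj (e ▸ hl)
      rw [hφ, FreeGroup.lift_apply_of, if_neg hli, if_neg hlj]
      exact Subgroup.mem_bot.mpr rfl
    exact Subgroup.mem_bot.mp hmem
  have huu1 : φ uu = 1 := hkill uu huui huuj
  have huu'1 : φ uu' = 1 := hkill uu' huu'i huu'j
  have heq : y * ((uu)⁻¹ * FreeGroup.of i) = y' * ((uu')⁻¹ * FreeGroup.of j) := by
    rw [← hyq, ← hy'q]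
  have heqφ := congrArg φ heq
  simp only [map_mul, map_inv, hφi, hφj, huu1, huu'1, inv_one, one_mul] at heqφ
  exact perm_sigma_tau_neq _ _ hy_mem hy'_mem heqφ

/-- letters of a set of elements of the free group -/
def lsupp (Y : Set (FreeGroup ι)) : Set ι := ⋃ y ∈ Y, wsupp y

lemma lsupp_card_le (Y : Set (FreeGroup ι)) : #(lsupp Y) ≤ #Y * ℵ₀ := by
  rw [lsupp, Set.biUnion_eq_iUnion]
  refine (Cardinal.mk_iUnion_le_sum_mk).trans ?_
  refine le_trans (Cardinal.sum_le_sum _ (fun _ => ℵ₀) ?_) ?_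
  · intro y
    exact Cardinal.mk_le_aleph0_iff.mpr (Set.countable_coe_iff.mpr (wsupp_finite _).countable)
  · rw [Cardinal.sum_const']

lemma lsupp_card_lt {κ : Cardinal.{u}} (haleph : ℵ₀ < κ) (Y : Set (FreeGroup ι))
    (hY : #Y < κ) : #(lsupp Y) < κ :=
  (lsupp_card_le Y).trans_lt (Cardinal.mul_lt_of_lt haleph.le hY haleph)

lemma not_mem_wsupp_of_not_mem_lsupp {Y : Set (FreeGroup ι)} {y : FreeGroup ι} (hy : y ∈ Y)
    {i : ι} (hi : i ∉ lsupp Y) : i ∉ wsupp y := fun hmem => hi (Set.mem_biUnion hy hmem)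

lemma exists_not_mem {α : Type u} {s : Set α} (h : #s < #α) : ∃ x, x ∉ s := by
  by_contra hx
  push_neg at hx
  have h1 : s = Set.univ := Set.eq_univ_of_forall hx
  rw [h1, Cardinal.mk_univ] at h
  exact lt_irrefl _ h

section Main

variable {κ : Cardinal.{u}} {G : Type u} [CommGroup G]
variable {A : Set G} {B : Set (FreeGroup ι)} {X₀ : Set G} {Y₀ : Set (FreeGroup ι)}
variable (h : A ≃ B)
variable (β : ι → FreeGroup ι) (hβB : ∀ i, β i ∈ B)
variable (z al : G → G) (hzX : ∀ g, z g ∈ X₀) (halA : ∀ g, al g ∈ A)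
  (hzal : ∀ g, z g * al g = g)

/-- the point of `G` corresponding to the `B`-approximation `β i` of the generator `x_i` -/
def aPt (i : ι) : G := ((h.symm ⟨β i, hβB i⟩ : A) : G)

/-- the `B`-point near `a_i * a_j` -/
def QPt (i j : ι) : FreeGroup ι :=
  ((h ⟨al (aPt h β hβB i * aPt h β hβB j), halA _⟩ : B) : FreeGroup ι)

lemma QPt_symm (i j : ι) : QPt h β hβB al halA i j = QPt h β hβB al halA j i :=
  congrArg (fun p : G => ((h ⟨al p, halA p⟩ : B) : FreeGroup ι)) (mul_comm _ _)

include z hzX hzal in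
/-- The response of the coarse equivalence to the ball `X₀⁻¹·{a_j : j ∈ T}`:
a small set `YT` such that each `Q i j` (`j ∈ T`) is a left `YT`-translate of `β i`. -/
lemma get_resp (haleph : ℵ₀ < κ) (hX₀ : #X₀ < κ)
    (hfwd_all : ∀ X : Set G, #X < κ → ∃ Y' : Set (FreeGroup ι), #Y' < κ ∧
      ∀ a : A, ∀ g : G, g ∈ X * {(a : G)} → ∀ hgA : g ∈ A,
        (h ⟨g, hgA⟩ : FreeGroup ι) ∈ Y' * {(h a : FreeGroup ι)})
    (T : Set ι) (hT : #T < κ) :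
    ∃ YT : Set (FreeGroup ι), #YT < κ ∧
      ∀ i j : ι, j ∈ T → ∃ y ∈ YT, QPt h β hβB al halA i j = y * β i := by
  classical
  set XT : Set G := ⋃ j ∈ T, (fun x => x⁻¹ * aPt h β hβB j) '' X₀ with hXT
  have hXTκ : #XT < κ := by
    rw [hXT, Set.biUnion_eq_iUnion]
    refine (Cardinal.mk_iUnion_le_sum_mk).trans_lt ?_
    refine lt_of_le_of_lt (Cardinal.sum_le_sum _ (fun _ => #X₀) fun j => Cardinal.mk_image_le) ?_
    rw [Cardinal.sum_const']
    exact Cardinal.mul_lt_of_lt haleph.le hT hX₀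
  obtain ⟨Y', hY', hfwd⟩ := hfwd_all XT hXTκ
  refine ⟨Y', hY', ?_⟩
  intro i j hj
  set p : G := aPt h β hβB i * aPt h β hβB j with hp
  have halp : al p = (z p)⁻¹ * p := eq_inv_mul_iff_mul_eq.mpr (hzal p)
  have hmem : al p ∈ XT * {((h.symm ⟨β i, hβB i⟩ : A) : G)} := by
    rw [Set.mem_mul]
    refine ⟨(z p)⁻¹ * aPt h β hβB j, ?_, aPt h β hβB i, Set.mem_singleton _, ?_⟩
    · exact Set.mem_biUnion hj ⟨z p, hzX p, rfl⟩
    · rw [halp, hp, mul_assoc]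
      congr 1
      exact mul_comm _ _
  have hres := hfwd (h.symm ⟨β i, hβB i⟩) (al p) hmem (halA p)
  rw [Equiv.apply_symm_apply] at hres
  rw [Set.mem_mul] at hres
  obtain ⟨y, hy, t, ht, hyt⟩ := hres
  rw [Set.mem_singleton_iff] at ht
  subst ht
  exact ⟨y, hy, hyt.symm⟩

end Main

end NotCoarseAux

set_option linter.unusedSectionVars true

open NotCoarseAux in
/-- Let `G` be an Abelian group of cardinality `γ > ℵ₀` and let `F_γ` be the free group
of rank `γ`. If either `ℵ₀ < κ < γ`, or `κ = γ` and `γ` is singular, then `G` and `F_γ`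
are not `κ`-coarsely equivalent: there are no large subsets `A ⊆ G`, `B ⊆ F_γ`
(i.e. `G = X₀ A` and `F_γ = Y₀ B` with `X₀ ∈ [G]^{<κ}`, `Y₀ ∈ [F_γ]^{<κ}`) and bijection
`h : A → B` such that for all `X ∈ [G]^{<κ}`, `Y ∈ [F_γ]^{<κ}` there exist
`X' ∈ [G]^{<κ}`, `Y' ∈ [F_γ]^{<κ}` with `h((X a) ∩ A) ⊆ Y' ⬝ h(a)` for all `a ∈ A` and
`h⁻¹((Y b) ∩ B) ⊆ X' ⬝ h⁻¹(b)` for all `b ∈ B`. -/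
theorem not_coarsely_equivalent_abelian_free (γ κ : Cardinal.{u}) (hγ : ℵ₀ < γ)
    (hκ : (ℵ₀ < κ ∧ κ < γ) ∨ (κ = γ ∧ γ.ord.cof < γ))
    (G : Type u) [CommGroup G] (hG : #G = γ)
    (ι : Type u) (hι : #ι = γ) :
    ¬ ∃ (A : Set G) (B : Set (FreeGroup ι)) (X₀ : Set G) (Y₀ : Set (FreeGroup ι)),
        #X₀ < κ ∧ #Y₀ < κ ∧ X₀ * A = Set.univ ∧ Y₀ * B = Set.univ ∧
        ∃ h : A ≃ B,
          ∀ X : Set G, ∀ Y : Set (FreeGroup ι), #X < κ → #Y < κ →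
            ∃ (X' : Set G) (Y' : Set (FreeGroup ι)), #X' < κ ∧ #Y' < κ ∧
              (∀ a : A, ∀ g : G, g ∈ X * {(a : G)} → ∀ hgA : g ∈ A,
                (h ⟨g, hgA⟩ : FreeGroup ι) ∈ Y' * {(h a : FreeGroup ι)}) ∧
              (∀ b : B, ∀ w : FreeGroup ι, w ∈ Y * {(b : FreeGroup ι)} → ∀ hwB : w ∈ B,
                (h.symm ⟨w, hwB⟩ : G) ∈ X' * {(h.symm b : G)}) := by
  classical
  rintro ⟨A, B, X₀, Y₀, hX₀, hY₀, hXA, hYB, h, hCP⟩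
  have haleph : ℵ₀ < κ := by
    rcases hκ with ⟨h1, _⟩ | ⟨h1, _⟩
    · exact h1
    · exact h1 ▸ hγ
  -- forward-only consequence of the coarse property
  have hfwd_all : ∀ X : Set G, #X < κ → ∃ Y' : Set (FreeGroup ι), #Y' < κ ∧
      ∀ a : A, ∀ g : G, g ∈ X * {(a : G)} → ∀ hgA : g ∈ A,
        (h ⟨g, hgA⟩ : FreeGroup ι) ∈ Y' * {(h a : FreeGroup ι)} := by
    intro X hX
    obtain ⟨X', Y', _, hY', hfwd, -⟩ := hCP X ∅ hX (by
      rw [Cardinal.mk_emptyCollection]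
      exact Cardinal.aleph0_pos.trans haleph)
    exact ⟨Y', hY', hfwd⟩
  -- decompositions from largeness
  have hgdecomp : ∀ g : G, ∃ x ∈ X₀, ∃ w ∈ A, x * w = g := by
    intro g
    have hmem : g ∈ X₀ * A := by rw [hXA]; exact Set.mem_univ g
    exact Set.mem_mul.mp hmem
  choose z hzX al halA hzal using hgdecomp
  have hxdecomp : ∀ i : ι, ∃ uY ∈ Y₀, ∃ b ∈ B, uY * b = FreeGroup.of i := by
    intro i
    have hmem : FreeGroup.of i ∈ Y₀ * B := by rw [hYB]; exact Set.mem_univ _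
    exact Set.mem_mul.mp hmem
  choose uY huY β hβB huβ using hxdecomp
  have hβeq : ∀ i : ι, β i = (uY i)⁻¹ * FreeGroup.of i :=
    fun i => eq_inv_mul_iff_mul_eq.mpr (huβ i)
  -- the clash, packaged with support conditions from response sets
  have clash : ∀ (i j : ι), i ≠ j →
      ∀ (YT YT' : Set (FreeGroup ι)),
      (∃ y ∈ YT, QPt h β hβB al halA i j = y * β i) →
      (∃ y ∈ YT', QPt h β hβB al halA i j = y * β j) →
      i ∉ lsupp YT ∪ lsupp Y₀ → j ∉ lsupp YT' ∪ lsupp Y₀ → False := by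
    intro i j hij YT YT' ⟨y, hy, hyq⟩ ⟨y', hy', hy'q⟩ hiT hjT'
    have hiYT : i ∉ lsupp YT := fun hc => hiT (Set.mem_union_left _ hc)
    have hiY₀ : i ∉ lsupp Y₀ := fun hc => hiT (Set.mem_union_right _ hc)
    have hjYT' : j ∉ lsupp YT' := fun hc => hjT' (Set.mem_union_left _ hc)
    have hjY₀ : j ∉ lsupp Y₀ := fun hc => hjT' (Set.mem_union_right _ hc)
    rw [hβeq i] at hyq
    rw [hβeq j] at hy'q
    exact ending_letter_clash i j hij y y' (uY i) (uY j) _ hyq hy'q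
      (not_mem_wsupp_of_not_mem_lsupp hy hiYT)
      (not_mem_wsupp_of_not_mem_lsupp hy' hjYT')
      (not_mem_wsupp_of_not_mem_lsupp (huY i) hiY₀)
      (not_mem_wsupp_of_not_mem_lsupp (huY i) hjY₀)
      (not_mem_wsupp_of_not_mem_lsupp (huY j) hiY₀)
      (not_mem_wsupp_of_not_mem_lsupp (huY j) hjY₀)
  rcases hκ with ⟨-, hκγ⟩ | ⟨hκγ, hcof⟩
  · -- Case 1 : ℵ₀ < κ < γ
    -- responses for singletons
    have hres : ∀ i : ι, ∃ YT : Set (FreeGroup ι), #YT < κ ∧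
        ∀ i' j : ι, j ∈ ({i} : Set ι) → ∃ y ∈ YT, QPt h β hβB al halA i' j = y * β i' := by
      intro i
      refine get_resp h β hβB z al hzX halA hzal haleph hX₀ hfwd_all {i} ?_
      rw [Cardinal.mk_singleton]
      exact Cardinal.one_lt_aleph0.trans haleph
    choose R hRκ hRprop using hres
    set L : ι → Set ι := fun i => lsupp (R i) ∪ lsupp Y₀ with hL
    have hLκ : ∀ i, #(L i) < κ := by
      intro i
      refine lt_of_le_of_lt (Cardinal.mk_union_le _ _) ?_
      exact Cardinal.add_lt_of_lt haleph.le (lsupp_card_lt haleph _ (hRκ i))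
        (lsupp_card_lt haleph _ hY₀)
    have hκι : κ ≤ #ι := by rw [hι]; exact hκγ.le
    obtain ⟨V, hV⟩ := Cardinal.le_mk_iff_exists_set.mp hκι
    set W : Set ι := (⋃ i ∈ V, L i) ∪ V with hW
    have hWκ : #W < γ := by
      refine lt_of_le_of_lt (Cardinal.mk_union_le _ _) ?_
      refine Cardinal.add_lt_of_lt hγ.le ?_ ?_
      · rw [Set.biUnion_eq_iUnion]
        refine lt_of_le_of_lt (Cardinal.mk_iUnion_le_sum_mk) ?_
        refine lt_of_le_of_lt (Cardinal.sum_le_sum _ (fun _ => κ) fun i => (hLκ _).le) ?_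
        rw [Cardinal.sum_const', hV, Cardinal.mul_eq_self haleph.le]
        exact hκγ
      · rw [hV]; exact hκγ
    have hWι : #W < #ι := by rw [hι]; exact hWκ
    obtain ⟨jstar, hjstar⟩ := exists_not_mem hWι
    have hsub : V ⊆ L jstar := by
      intro i hiV
      by_contra hiL
      have hne : i ≠ jstar := by rintro rfl; exact hjstar (Set.mem_union_right _ hiV)
      have hjL : jstar ∉ L i := fun hc =>
        hjstar (Set.mem_union_left _ (Set.mem_biUnion hiV hc))
      -- two decompositions of Q i jstar
      have h1 : ∃ y ∈ R jstar, QPt h β hβB al halA i jstar = y * β i :=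
        hRprop jstar i jstar (Set.mem_singleton _)
      have h2 : ∃ y ∈ R i, QPt h β hβB al halA i jstar = y * β jstar := by
        obtain ⟨y, hy, hyq⟩ := hRprop i jstar i (Set.mem_singleton _)
        exact ⟨y, hy, by rw [QPt_symm h β hβB al halA i jstar]; exact hyq⟩
      exact clash i jstar hne (R jstar) (R i) h1 h2 hiL hjL
    have hle : κ ≤ #(L jstar) := hV ▸ Cardinal.mk_le_mk_of_subset hsub
    exact absurd hle (not_le.mpr (hLκ jstar))
  · -- Case 2 : κ = γ singular
    subst hκγ
    have hmkT : #(κ.ord.ToType) = κ := by rw [Cardinal.mk_toType, Cardinal.card_ord]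
    obtain ⟨e⟩ : Nonempty (ι ≃ κ.ord.ToType) := Cardinal.eq.mp (by rw [hι, hmkT])
    haveI hwo : IsWellOrder κ.ord.ToType (· < ·) := isWellOrder_lt
    obtain ⟨S, hSu, hScard⟩ :=
      Order.exists_cof_eq κ.ord.ToType
    rw [Ordinal.cof_toType] at hScard
    set blk : κ.ord.ToType → Set ι := fun s => {x : ι | ¬ s < e x} with hblk
    have hblkcard : ∀ s, #(blk s) < κ := by
      intro s
      have h1 : #(blk s) ≤ #(Set.Iic s) := by
        refine Cardinal.mk_le_of_injective
          (f := fun x : blk s => (⟨e x.1, not_lt.mp x.2⟩ : Set.Iic s)) ?_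
        intro x x' hxx'
        exact Subtype.ext (e.injective (congrArg Subtype.val hxx'))
      refine h1.trans_lt ?_
      have h2 : (Set.Iic s : Set κ.ord.ToType) ⊆ Set.Iio s ∪ {s} := by
        intro x hx
        rcases lt_or_eq_of_le (Set.mem_Iic.mp hx) with hlt | heq
        · exact Set.mem_union_left _ hlt
        · exact Set.mem_union_right _ heq
      refine lt_of_le_of_lt (Cardinal.mk_le_mk_of_subset h2) ?_
      refine lt_of_le_of_lt (Cardinal.mk_union_le _ _) ?_
      refine Cardinal.add_lt_of_lt (hγ.le) ?_ ?_
      · have h3 : #{y : κ.ord.ToType // y < s} < κ := by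
          rw [← Ordinal.card_typein]
          exact Cardinal.lt_ord.mp (Ordinal.typein_lt_self s)
        exact h3
      · rw [Cardinal.mk_singleton]
        exact Cardinal.one_lt_aleph0.trans hγ
    have hcov : ∀ x : ι, ∃ s, ∃ _ : s ∈ S, x ∈ blk s := by
      intro x
      obtain ⟨s, hsS, hs⟩ := hSu (e x)
      exact ⟨s, hsS, not_lt.mpr hs⟩
    -- responses for blocks
    have hresb : ∀ s : S, ∃ YT : Set (FreeGroup ι), #YT < κ ∧
        ∀ i j : ι, j ∈ blk s.1 → ∃ y ∈ YT, QPt h β hβB al halA i j = y * β i :=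
      fun s => get_resp h β hβB z al hzX halA hzal haleph hX₀ hfwd_all (blk s.1)
        (hblkcard s.1)
    choose Rb hRbκ hRbprop using hresb
    -- escape point for each block
    have hresp : ∀ s : S, ∃ pt : ι, pt ∉ lsupp (Rb s) ∪ lsupp Y₀ := by
      intro s
      apply exists_not_mem
      rw [hι]
      refine lt_of_le_of_lt (Cardinal.mk_union_le _ _) ?_
      exact Cardinal.add_lt_of_lt hγ.le (lsupp_card_lt haleph _ (hRbκ s))
        (lsupp_card_lt haleph _ hY₀)
    choose pt hpt using hresp
    set Sstar : Set ι := Set.range pt with hSstar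
    have hSstarκ : #Sstar < κ := by
      refine lt_of_le_of_lt Cardinal.mk_range_le ?_
      rw [hScard]
      exact hcof
    obtain ⟨Rstar, hRstarκ, hRstarprop⟩ :=
      get_resp h β hβB z al hzX halA hzal haleph hX₀ hfwd_all Sstar hSstarκ
    -- every letter is accounted for
    have hcover2 : ∀ x : ι, x ∈ ((lsupp Rstar ∪ lsupp Y₀) ∪ Sstar : Set ι) := by
      intro x
      by_contra hx
      have hx1 : x ∉ lsupp Rstar ∪ lsupp Y₀ := fun hc => hx (Set.mem_union_left _ hc)
      have hx2 : x ∉ Sstar := fun hc => hx (Set.mem_union_right _ hc)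
      obtain ⟨s, hsS, hxs⟩ := hcov x
      set i : ι := pt ⟨s, hsS⟩ with hi
      have hne : i ≠ x := by
        rintro rfl
        exact hx2 (Set.mem_range_self _)
      have h1 : ∃ y ∈ Rb ⟨s, hsS⟩, QPt h β hβB al halA i x = y * β i :=
        hRbprop ⟨s, hsS⟩ i x hxs
      have h2 : ∃ y ∈ Rstar, QPt h β hβB al halA i x = y * β x := by
        obtain ⟨y, hy, hyq⟩ := hRstarprop x i (Set.mem_range_self _)
        exact ⟨y, hy, by rw [QPt_symm h β hβB al halA i x]; exact hyq⟩
      exact clash i x hne (Rb ⟨s, hsS⟩) Rstar h1 h2 (hpt ⟨s, hsS⟩) hx1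
    have hle : #ι ≤ #(((lsupp Rstar ∪ lsupp Y₀) ∪ Sstar : Set ι)) := by
      rw [← Cardinal.mk_univ]
      exact Cardinal.mk_le_mk_of_subset (fun x _ => hcover2 x)
    rw [hι] at hle
    have hlt : #(((lsupp Rstar ∪ lsupp Y₀) ∪ Sstar : Set ι)) < κ := by
      refine lt_of_le_of_lt (Cardinal.mk_union_le _ _) ?_
      refine Cardinal.add_lt_of_lt hγ.le ?_ hSstarκ
      refine lt_of_le_of_lt (Cardinal.mk_union_le _ _) ?_
      exact Cardinal.add_lt_of_lt hγ.le (lsupp_card_lt haleph _ hRstarκ)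
        (lsupp_card_lt haleph _ hY₀)
    exact absurd hle (not_le.mpr hlt)
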